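/- arXiv:2510.03210 — 6 statements merged into one kernel-verified Lean document; each statement's English description precedes it below -/
import Mathlib

section
/- Let Γ be a group and define maps s₁, s₂, s₃ on Γ⁴ by s₁(a,b,c,d) = (ab⁻¹a, a, c, d), s₂(a,b,c,d) = (a, bc⁻¹b, b, d), s₃(a,b,c,d) = (a, b, cd⁻¹c, c). Then these maps satisfy the braid relations: s₁s₂s₁ = s₂s₁s₂, s₂s₃s₂ = s₃s₂s₃, and s₁s₃ = s₃s₁ (as maps Γ⁴ → Γ⁴). -/
/-- `s₁ (a,b,c,d) = (ab⁻¹a, a, c, d)`. -/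
def s1 {Γ : Type*} [Group Γ] (p : Γ × Γ × Γ × Γ) : Γ × Γ × Γ × Γ :=
  (p.1 * p.2.1⁻¹ * p.1, p.1, p.2.2.1, p.2.2.2)

/-- `s₂ (a,b,c,d) = (a, bc⁻¹b, b, d)`. -/
def s2 {Γ : Type*} [Group Γ] (p : Γ × Γ × Γ × Γ) : Γ × Γ × Γ × Γ :=
  (p.1, p.2.1 * p.2.2.1⁻¹ * p.2.1, p.2.1, p.2.2.2)

/-- `s₃ (a,b,c,d) = (a, b, cd⁻¹c, c)`. -/
def s3 {Γ : Type*} [Group Γ] (p : Γ × Γ × Γ × Γ) : Γ × Γ × Γ × Γ :=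
  (p.1, p.2.1, p.2.2.1 * p.2.2.2⁻¹ * p.2.2.1, p.2.2.1)

/-- The maps `s₁, s₂, s₃` on `Γ⁴` satisfy the braid relations. -/
theorem braid_relations_on_fourth_power {Γ : Type*} [Group Γ] :
    (s1 ∘ s2 ∘ s1 = s2 ∘ s1 ∘ s2 (Γ := Γ)) ∧
    (s2 ∘ s3 ∘ s2 = s3 ∘ s2 ∘ s3 (Γ := Γ)) ∧
    (s1 ∘ s3 = s3 ∘ s1 (Γ := Γ)) := by
  refine ⟨?_, ?_, ?_⟩ <;> funext p <;>
    simp [s1, s2, s3, Prod.ext_iff, mul_assoc]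
end

section
/- Let Γ be a group and s₁, s₂, s₃ : Γ⁴ → Γ⁴ the maps s₁(a,b,c,d) = (ab⁻¹a, a, c, d), s₂(a,b,c,d) = (a, bc⁻¹b, b, d), s₃(a,b,c,d) = (a, b, cd⁻¹c, c). Then (s₃ ∘ s₂ ∘ s₁)⁴ maps (a,b,c,d) to (γaδ⁻¹, γbδ⁻¹, γcδ⁻¹, γdδ⁻¹), where γ = ab⁻¹cd⁻¹ and δ = a⁻¹bc⁻¹d. -/
/-- The fourth iterate of `s₃ ∘ s₂ ∘ s₁` sends `(a,b,c,d)` to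
`(γaδ⁻¹, γbδ⁻¹, γcδ⁻¹, γdδ⁻¹)` where `γ = ab⁻¹cd⁻¹` and `δ = a⁻¹bc⁻¹d`. -/
theorem center_action {Γ : Type*} [Group Γ] (a b c d : Γ) :
    (s3 ∘ s2 ∘ s1)^[4] (a, b, c, d) =
      ((a * b⁻¹ * c * d⁻¹) * a * (a⁻¹ * b * c⁻¹ * d)⁻¹,
       (a * b⁻¹ * c * d⁻¹) * b * (a⁻¹ * b * c⁻¹ * d)⁻¹,
       (a * b⁻¹ * c * d⁻¹) * c * (a⁻¹ * b * c⁻¹ * d)⁻¹,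
       (a * b⁻¹ * c * d⁻¹) * d * (a⁻¹ * b * c⁻¹ * d)⁻¹) := by
  show (s3 ∘ s2 ∘ s1) ((s3 ∘ s2 ∘ s1) ((s3 ∘ s2 ∘ s1) ((s3 ∘ s2 ∘ s1) (a,b,c,d)))) = _
  simp only [s1, s2, s3, Function.comp]
  refine Prod.ext ?_ (Prod.ext ?_ (Prod.ext ?_ ?_)) <;> group
end

section
/- The equivariant quandle on a group Γ is isomorphic to a subquandle of the conjugation quandle of the wreath product Γ ≀ ℤ/2: the subset C = {((a, a⁻¹), ε) : a ∈ Γ} of (Γ × Γ) ⋊ ℤ/2 (ε the nontrivial element acting by swapping coordinates) is closed under conjugation, and the bijection a ↦ ((a,a⁻¹), ε) carries the operation a ◁ b = ab⁻¹a to conjugation: ((a,a⁻¹),ε)((b,b⁻¹),ε)((a,a⁻¹),ε)⁻¹ = ((ab⁻¹a, (ab⁻¹a)⁻¹), ε). -/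
/-- The coordinate-swapping automorphism of `Γ × Γ`. -/
def swapAut (Γ : Type*) [Group Γ] : MulAut (Γ × Γ) :=
  (MulEquiv.prodComm : (Γ × Γ) ≃* (Γ × Γ))

/-- The action of `ℤ/2` on `Γ × Γ` where the non-trivial element swaps the
coordinates. -/
def wreathAction (Γ : Type*) [Group Γ] :
    Multiplicative (ZMod 2) →* MulAut (Γ × Γ) :=
  MonoidHom.mk' (fun x => swapAut Γ ^ (Multiplicative.toAdd x).val) (by
    have h2 : swapAut Γ ^ 2 = 1 := by
      ext x <;> simp [swapAut, pow_succ, MulAut.mul_apply]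
    intro a b
    show swapAut Γ ^ ((Multiplicative.toAdd a + Multiplicative.toAdd b).val) = _
    rw [ZMod.val_add, ← pow_eq_pow_mod _ h2, pow_add])

/-- The non-trivial element `ε` of `ℤ/2`. -/
def epsZ2 : Multiplicative (ZMod 2) := Multiplicative.ofAdd 1

/-- The element `((a, a⁻¹), ε)` of the wreath product `Γ ≀ ℤ/2 = (Γ × Γ) ⋊ ℤ/2`. -/
def elt {Γ : Type*} [Group Γ] (a : Γ) :
    (Γ × Γ) ⋊[wreathAction Γ] Multiplicative (ZMod 2) :=
  ⟨(a, a⁻¹), epsZ2⟩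

/-- The subset `C = {((a, a⁻¹), ε) : a ∈ Γ}` of the wreath product
`Γ ≀ ℤ/2 = (Γ × Γ) ⋊ ℤ/2` is closed under conjugation, and conjugation within `C`
realizes the equivariant quandle operation `a ◁ b = a b⁻¹ a`:
`((a,a⁻¹),ε) ((b,b⁻¹),ε) ((a,a⁻¹),ε)⁻¹ = ((ab⁻¹a, (ab⁻¹a)⁻¹), ε)`. -/
theorem equivariant_quandle_as_conjugation_quandle {Γ : Type*} [Group Γ] :
    (∀ (g : (Γ × Γ) ⋊[wreathAction Γ] Multiplicative (ZMod 2)) (x),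
      x ∈ Set.range (elt (Γ := Γ)) → g * x * g⁻¹ ∈ Set.range (elt (Γ := Γ))) ∧
    (∀ a b : Γ, elt a * elt b * (elt a)⁻¹ = elt (a * b⁻¹ * a)) := by
  have hval : ∀ z : ZMod 2, z = 0 ∨ z = 1 := by decide
  constructor
  · rintro ⟨⟨p, q⟩, s⟩ x ⟨b, rfl⟩
    rcases hval (Multiplicative.toAdd s) with h | h
    · refine ⟨p * b * q⁻¹, ?_⟩
      ext <;>
        simp only [elt, epsZ2, SemidirectProduct.mul_left, SemidirectProduct.mul_right,
          SemidirectProduct.inv_left, SemidirectProduct.inv_right] <;>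
        simp [elt, epsZ2, SemidirectProduct.mul_left, SemidirectProduct.mul_right,
          SemidirectProduct.inv_left, SemidirectProduct.inv_right, wreathAction,
          swapAut, h, mul_assoc, pow_succ, show (1 : ZMod 2).val = 1 from rfl,
          -SemidirectProduct.mk_eq_inl_mul_inr, show (1 + 1 : ZMod 2) = 0 from rfl]
    · refine ⟨p * b⁻¹ * q⁻¹, ?_⟩
      ext <;>
        simp only [elt, epsZ2, SemidirectProduct.mul_left, SemidirectProduct.mul_right,
          SemidirectProduct.inv_left, SemidirectProduct.inv_right] <;>
        simp [elt, epsZ2, SemidirectProduct.mul_left, SemidirectProduct.mul_right,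
          SemidirectProduct.inv_left, SemidirectProduct.inv_right, wreathAction,
          swapAut, h, mul_assoc, pow_succ, show (1 : ZMod 2).val = 1 from rfl,
          -SemidirectProduct.mk_eq_inl_mul_inr, show (1 + 1 : ZMod 2) = 0 from rfl]
  · intro a b
    ext <;>
      simp only [elt, epsZ2, SemidirectProduct.mul_left, SemidirectProduct.mul_right,
        SemidirectProduct.inv_left, SemidirectProduct.inv_right] <;>
      simp [elt, epsZ2, SemidirectProduct.mul_left, SemidirectProduct.mul_right,
        SemidirectProduct.inv_left, SemidirectProduct.inv_right, wreathAction,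
        swapAut, mul_assoc, pow_succ, show (1 : ZMod 2).val = 1 from rfl,
          -SemidirectProduct.mk_eq_inl_mul_inr, show (1 + 1 : ZMod 2) = 0 from rfl]
end

section
/- Let M₁, M₂, M₃ ∈ SL₂(F) over a field F, and set a = tr(M₁), b = tr(M₂), c = tr(M₃), x = tr(M₂M₃), y = tr(M₃M₁), z = tr(M₁M₂), p = tr(M₁M₂M₃). Then p² − (ax + by + cz − abc)p + (a² + b² + c² + x² + y² + z² + xyz − abz − bcx − cay − 4) = 0. -/
/-- The Fricke trace identity for a triple `M₁, M₂, M₃ ∈ SL₂(F)`: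
with `a = tr M₁`, `b = tr M₂`, `c = tr M₃`, `x = tr(M₂M₃)`, `y = tr(M₃M₁)`,
`z = tr(M₁M₂)` and `p = tr(M₁M₂M₃)`, one has
`p² − (ax+by+cz−abc)p + (a²+b²+c²+x²+y²+z²+xyz−abz−bcx−cay−4) = 0`. -/
theorem fricke_identity {F : Type*} [Field F]
    (M₁ M₂ M₃ : Matrix.SpecialLinearGroup (Fin 2) F) :
    let a := Matrix.trace M₁.val
    let b := Matrix.trace M₂.val
    let c := Matrix.trace M₃.val
    let x := Matrix.trace (M₂ * M₃).val
    let y := Matrix.trace (M₃ * M₁).val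
    let z := Matrix.trace (M₁ * M₂).val
    let p := Matrix.trace (M₁ * M₂ * M₃).val
    p ^ 2 - (a * x + b * y + c * z - a * b * c) * p +
      (a ^ 2 + b ^ 2 + c ^ 2 + x ^ 2 + y ^ 2 + z ^ 2 + x * y * z -
        a * b * z - b * c * x - c * a * y - 4) = 0 := by
  intro a b c x y z p
  set m1 := M₁.val with hm1
  set m2 := M₂.val with hm2
  set m3 := M₃.val with hm3
  have h1 : m1 0 0 * m1 1 1 - m1 0 1 * m1 1 0 = 1 := by
    have := M₁.prop; rwa [← hm1, Matrix.det_fin_two] at this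
  have h2 : m2 0 0 * m2 1 1 - m2 0 1 * m2 1 0 = 1 := by
    have := M₂.prop; rwa [← hm2, Matrix.det_fin_two] at this
  have h3 : m3 0 0 * m3 1 1 - m3 0 1 * m3 1 0 = 1 := by
    have := M₃.prop; rwa [← hm3, Matrix.det_fin_two] at this
  simp only [a, b, c, x, y, z, p, Matrix.SpecialLinearGroup.coe_mul, ← hm1, ← hm2, ← hm3,
    Matrix.trace_fin_two, Matrix.mul_apply, Fin.sum_univ_two]
  linear_combination
    (2 + -1*(m3 1 1)^2 + -1*(m3 0 0)^2 + -1*(m2 1 1)^2 + 1*(m2 1 1)^2*(m3 0 0)*(m3 1 1) + -1*(m2 1 0)*(m2 1 1)*(m3 0 1)*(m3 1 1) + 1*(m2 1 0)*(m2 1 1)*(m3 0 0)*(m3 0 1) + -1*(m2 1 0)^2*(m3 0 1)^2 + -1*(m2 0 1)*(m2 1 1)*(m3 1 0)*(m3 1 1) + 1*(m2 0 1)*(m2 1 1)*(m3 0 0)*(m3 1 0) + -1*(m2 0 1)^2*(m3 1 0)^2 + 1*(m2 0 0)*(m2 1 1)*(m3 1 1)^2 + -2*(m2 0 0)*(m2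 1 1)*(m3 0 0)*(m3 1 1) + 1*(m2 0 0)*(m2 1 1)*(m3 0 0)^2 + 1*(m2 0 0)*(m2 1 0)*(m3 0 1)*(m3 1 1) + -1*(m2 0 0)*(m2 1 0)*(m3 0 0)*(m3 0 1) + 1*(m2 0 0)*(m2 0 1)*(m3 1 0)*(m3 1 1) + -1*(m2 0 0)*(m2 0 1)*(m3 0 0)*(m3 1 0) + -1*(m2 0 0)^2 + 1*(m2 0 0)^2*(m3 0 0)*(m3 1 1)) * h1 +
    (2 + -2*(m3 0 0)*(m3 1 1) + -1*(m1 1 1)^2 + 1*(m1 1 1)^2*(m3 0 0)*(m3 1 1) + -1*(m1 1 0)*(m1 1 1)*(m3 0 1)*(m3 1 1) + 1*(m1 1 0)*(m1 1 1)*(m3 0 0)*(m3 0 1) + -1*(m1 1 0)^2*(m3 0 1)^2 + -1*(m1 0 1)*(m1 1 1)*(m3 1 0)*(m3 1 1) + 1*(m1 0 1)*(m1 1 1)*(m3 0 0)*(m3 1 0) + 1*(m1 0 1)*(m1 1 0)*(m3 1 1)^2 + -2*(m1 0 1)*(m1 1 0)*(m3 0 0)*(m3 1 1) + 1*(m1 0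 1)*(m1 1 0)*(m3 0 0)^2 + -1*(m1 0 1)^2*(m3 1 0)^2 + 1*(m1 0 0)*(m1 1 0)*(m3 0 1)*(m3 1 1) + -1*(m1 0 0)*(m1 1 0)*(m3 0 0)*(m3 0 1) + 1*(m1 0 0)*(m1 0 1)*(m3 1 0)*(m3 1 1) + -1*(m1 0 0)*(m1 0 1)*(m3 0 0)*(m3 1 0) + -1*(m1 0 0)^2 + 1*(m1 0 0)^2*(m3 0 0)*(m3 1 1)) * h2 +
    (-2*(m2 0 1)*(m2 1 0) + 1*(m1 1 1)^2*(m2 0 1)*(m2 1 0) + -1*(m1 1 0)*(m1 1 1)*(m2 0 1)*(m2 1 1) + 1*(m1 1 0)*(m1 1 1)*(m2 0 0)*(m2 0 1) + -1*(m1 1 0)^2*(m2 0 1)^2 + -1*(m1 0 1)*(m1 1 1)*(m2 1 0)*(m2 1 1) + 1*(m1 0 1)*(m1 1 1)*(m2 0 0)*(m2 1 0) + -2*(m1 0 1)*(m1 1 0) + 1*(m1 0 1)*(m1 1 0)*(m2 1 1)^2 + -2*(m1 0 1)*(m1 1 0)*(m2 0 1)*(m2 1 0) + 1*(m1 0 1)*(m1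 1 0)*(m2 0 0)^2 + -1*(m1 0 1)^2*(m2 1 0)^2 + 1*(m1 0 0)*(m1 1 0)*(m2 0 1)*(m2 1 1) + -1*(m1 0 0)*(m1 1 0)*(m2 0 0)*(m2 0 1) + 1*(m1 0 0)*(m1 0 1)*(m2 1 0)*(m2 1 1) + -1*(m1 0 0)*(m1 0 1)*(m2 0 0)*(m2 1 0) + 1*(m1 0 0)^2*(m2 0 1)*(m2 1 0)) * h3
end

section
/- Let p be a prime and let A, B ∈ SL₂(𝔽_p) be such that their images generate PSL₂(𝔽_p). If Ã, B̃ ∈ SL₂(𝔽_p) satisfy tr(w(Ã,B̃)) = tr(w(A,B)) for every word w in the free group F₂ (equivalently tr(Ã)=tr(A), tr(B̃)=tr(B), tr(ÃB̃)=tr(AB) suffice), then there exists g ∈ GL₂(𝔽_p) with gÃg⁻¹ = A and gB̃g⁻¹ = B. -/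
open Matrix


section Identities
variable {R : Type*} [CommRing R]

private lemma fin2_cases (M : Matrix (Fin 2) (Fin 2) R) : ∃ a b c d, M = !![a,b;c,d] :=
  ⟨M 0 0, M 0 1, M 1 0, M 1 1, Matrix.eta_fin_two M⟩

lemma sl2_sq (M : Matrix (Fin 2) (Fin 2) R) (hM : M.det = 1) :
    M * M = (trace M) • M - 1 := by
  obtain ⟨a, b, c, d, rfl⟩ := fin2_cases M
  rw [det_fin_two_of] at hM
  rw [trace_fin_two_of]
  ext i j
  fin_cases i <;> fin_cases j <;>
    simp [Matrix.mul_apply, Fin.sum_univ_two, Matrix.one_apply] <;>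
    first | ring1 | linear_combination -hM

lemma sl2_rev (M N : Matrix (Fin 2) (Fin 2) R) :
    N * M = (trace (M*N) - trace M * trace N) • (1 : Matrix (Fin 2) (Fin 2) R)
      + (trace N) • M + (trace M) • N - M * N := by
  obtain ⟨a, b, c, d, rfl⟩ := fin2_cases M
  obtain ⟨a', b', c', d', rfl⟩ := fin2_cases N
  rw [trace_fin_two_of, trace_fin_two_of]
  ext i j
  fin_cases i <;> fin_cases j <;>
    simp [Matrix.mul_apply, Fin.sum_univ_two, Matrix.one_apply, trace_fin_two] <;> ring

lemma sl2_m_mn (M N : Matrix (Fin 2) (Fin 2) R) (hM : M.det = 1) :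
    M * (M * N) = (trace M) • (M * N) - N := by
  rw [← mul_assoc, sl2_sq M hM, Matrix.sub_mul, smul_mul_assoc, Matrix.one_mul]

lemma sl2_mn_n (M N : Matrix (Fin 2) (Fin 2) R) (hN : N.det = 1) :
    (M * N) * N = (trace N) • (M * N) - M := by
  rw [mul_assoc, sl2_sq N hN, Matrix.mul_sub, mul_smul_comm, Matrix.mul_one]

lemma sl2_mn_m (M N : Matrix (Fin 2) (Fin 2) R) (hM : M.det = 1) :
    (M * N) * M = (trace (M*N)) • M - (trace N) • (1 : Matrix (Fin 2) (Fin 2) R) + N := by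
  calc (M * N) * M = M * (N * M) := by rw [mul_assoc]
    _ = _ := by
        rw [sl2_rev M N, Matrix.mul_sub, Matrix.mul_add, Matrix.mul_add, mul_smul_comm,
          Matrix.mul_one, mul_smul_comm, mul_smul_comm, sl2_sq M hM, sl2_m_mn M N hM]
        module

lemma sl2_n_mn (M N : Matrix (Fin 2) (Fin 2) R) (hN : N.det = 1) :
    N * (M * N) = (trace (M*N)) • N + M - (trace M) • (1 : Matrix (Fin 2) (Fin 2) R) := by
  calc N * (M * N) = (N * M) * N := by rw [mul_assoc]
    _ = _ := by
        rw [sl2_rev M N, Matrix.sub_mul, Matrix.add_mul, Matrix.add_mul, smul_mul_assoc,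
          Matrix.one_mul, smul_mul_assoc, smul_mul_assoc, sl2_sq N hN, sl2_mn_n M N hN]
        module

lemma sl2_mn_mn (M N : Matrix (Fin 2) (Fin 2) R) (hM : M.det = 1) (hN : N.det = 1) :
    (M * N) * (M * N) = (trace (M*N)) • (M * N) - 1 := by
  rw [← mul_assoc, sl2_mn_m M N hM, Matrix.add_mul, Matrix.sub_mul, smul_mul_assoc,
    smul_mul_assoc, Matrix.one_mul, sl2_sq N hN]
  module

end Identities

section Words
variable {R : Type*} [CommRing R]

/-- the word family 1, M, N, M*N -/
def wrd (M N : Matrix (Fin 2) (Fin 2) R) : Fin 4 → Matrix (Fin 2) (Fin 2) R := ![1, M, N, M*N]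

/-- structure constants of the algebra spanned by the four words, in terms of traces -/
def scs (a b c : R) : Fin 4 → Fin 4 → Fin 4 → R :=
  ![![![1,0,0,0], ![0,1,0,0], ![0,0,1,0], ![0,0,0,1]],
    ![![0,1,0,0], ![-1,a,0,0], ![0,0,0,1], ![0,0,-1,a]],
    ![![0,0,1,0], ![c-a*b, b, a, -1], ![-1,0,b,0], ![-a,1,c,0]],
    ![![0,0,0,1], ![-b,c,1,0], ![0,-1,0,b], ![-1,0,0,c]]]

lemma wrd_mul (M N : Matrix (Fin 2) (Fin 2) R) (hM : M.det = 1) (hN : N.det = 1) (i j : Fin 4) :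
    wrd M N i * wrd M N j
      = ∑ k, scs (trace M) (trace N) (trace (M*N)) i j k • wrd M N k := by
  fin_cases i <;> fin_cases j <;>
    simp [wrd, scs, Fin.sum_univ_four] <;>
    first
      | (rw [sl2_sq M hM]; module)
      | (rw [sl2_sq N hN]; module)
      | (rw [sl2_rev M N]; module)
      | (rw [sl2_m_mn M N hM]; module)
      | (rw [sl2_mn_n M N hN]; module)
      | (rw [sl2_mn_m M N hM]; module)
      | (rw [sl2_n_mn M N hN]; module)
      | (rw [sl2_mn_mn M N hM hN]; module)

lemma wrd_trace (M N : Matrix (Fin 2) (Fin 2) R) (k : Fin 4) :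
    trace (wrd M N k) = ![2, trace M, trace N, trace (M*N)] k := by
  fin_cases k <;> simp [wrd, trace_one]

lemma wrd_trace_mul (M N : Matrix (Fin 2) (Fin 2) R) (hM : M.det = 1) (hN : N.det = 1)
    (i j : Fin 4) :
    trace (wrd M N i * wrd M N j)
      = ∑ k, scs (trace M) (trace N) (trace (M*N)) i j k
          * (![2, trace M, trace N, trace (M*N)] k) := by
  rw [wrd_mul M N hM hN, trace_sum]
  exact Finset.sum_congr rfl fun k _ => by rw [trace_smul, wrd_trace, smul_eq_mul]


end Words

section Transfer
variable {F : Type*} [Field F]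

lemma trace_mul_single (X : Matrix (Fin 2) (Fin 2) F) (i j : Fin 2) :
    trace (X * Matrix.single j i 1) = X i j := by
  fin_cases i <;> fin_cases j <;>
    simp [trace_fin_two, Matrix.mul_apply, Fin.sum_univ_two, Matrix.single]

lemma card_eq_finrank : Fintype.card (Fin 4) = Module.finrank F (Matrix (Fin 2) (Fin 2) F) := by
  simp [Module.finrank_matrix]

-- main transfer argument: zero trace pairing against a basis forces zero
lemma eq_zero_of_trace_pair (X : Matrix (Fin 2) (Fin 2) F)
    (w : Fin 4 → Matrix (Fin 2) (Fin 2) F) (hind : LinearIndependent F w)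
    (h : ∀ j, trace (X * w j) = 0) : X = 0 := by
  obtain ⟨b, hb⟩ : ∃ b : Module.Basis (Fin 4) F (Matrix (Fin 2) (Fin 2) F), ⇑b = w :=
    ⟨_, coe_basisOfLinearIndependentOfCardEqFinrank hind (card_eq_finrank (F := F))⟩
  have key : ∀ Y : Matrix (Fin 2) (Fin 2) F, trace (X * Y) = 0 := by
    intro Y
    have hY : Y = ∑ i, b.repr Y i • w i := by
      conv_lhs => rw [← b.sum_repr Y]
      simp [hb]
    rw [hY, Finset.mul_sum, trace_sum]
    simp only [mul_smul_comm, trace_smul, h, smul_eq_mul, mul_zero]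
    simp
  ext i j
  have := key (Matrix.single j i 1)
  rw [_root_.trace_mul_single] at this
  simpa using this
end Transfer


abbrev SL2 (p : ℕ) := Matrix.SpecialLinearGroup (Fin 2) (ZMod p)
abbrev prj (p : ℕ) : SL2 p →* SL2 p ⧸ Subgroup.center (SL2 p) :=
  QuotientGroup.mk' (Subgroup.center (SL2 p))

section Groups
variable {p : ℕ} [Fact p.Prime]

def UU : SL2 p := ⟨!![1,1;0,1], by simp [det_fin_two_of]⟩
def LL : SL2 p := ⟨!![1,0;1,1], by simp [det_fin_two_of]⟩

lemma center_char {z : SL2 p} (hz : z ∈ Subgroup.center (SL2 p)) :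
    ∃ r : ZMod p, r * r = 1 ∧ z.val = r • (1 : Matrix (Fin 2) (Fin 2) (ZMod p)) := by
  obtain ⟨r, hr, hrv⟩ := Matrix.SpecialLinearGroup.mem_center_iff.mp hz
  refine ⟨r, by simpa [pow_two] using hr, ?_⟩
  rw [← hrv]
  ext i j
  simp [Matrix.scalar_apply, Matrix.diagonal_apply, Matrix.smul_apply, Matrix.one_apply]

lemma UL_ne_LU : (prj p UU) * (prj p LL) ≠ (prj p LL) * (prj p UU) := by
  intro h
  rw [← _root_.map_mul, ← _root_.map_mul, QuotientGroup.mk'_eq_mk'] at h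
  obtain ⟨z, hz, hzeq⟩ := h
  obtain ⟨r, hr2, hrv⟩ := center_char hz
  have hval : (UU * LL * z).val = (LL * UU : SL2 p).val := by rw [hzeq]
  rw [Matrix.SpecialLinearGroup.coe_mul, Matrix.SpecialLinearGroup.coe_mul,
    Matrix.SpecialLinearGroup.coe_mul, hrv] at hval
  have h10 : (1 : ZMod p) * r = 1 := by
    have := congrFun (congrFun hval 1) 0
    simpa [UU, LL, Matrix.mul_apply, Fin.sum_univ_two, Matrix.smul_apply, Matrix.one_apply]
      using this
  have h00 : (1 + 1 : ZMod p) * r = 1 := by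
    have := congrFun (congrFun hval 0) 0
    simpa [UU, LL, Matrix.mul_apply, Fin.sum_univ_two, Matrix.smul_apply, Matrix.one_apply,
      add_mul] using this
  rw [one_mul] at h10
  rw [h10] at h00
  have : (1 : ZMod p) = 0 := by linear_combination h00
  exact one_ne_zero this

section WithGen
variable (A B : SL2 p)
  (hgen : Subgroup.closure ({prj p A, prj p B} : Set (SL2 p ⧸ Subgroup.center (SL2 p))) = ⊤)

include hgen

lemma commute_contra (h : A.val * B.val = B.val * A.val) : False := by
  have hc : A * B = B * A := Subtype.ext (by
    rw [Matrix.SpecialLinearGroup.coe_mul, Matrix.SpecialLinearGroup.coe_mul, h])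
  have hπ : (prj p A) * (prj p B) = (prj p B) * (prj p A) := by
    rw [← _root_.map_mul, ← _root_.map_mul, hc]
  set S0 : Set (SL2 p ⧸ Subgroup.center (SL2 p)) := {prj p A, prj p B} with hS0
  have hsub : S0 ⊆ Subgroup.centralizer S0 := by
    intro x hx
    rw [SetLike.mem_coe, Subgroup.mem_centralizer_iff]
    intro h' hh'
    rcases hx with rfl | hx <;> rcases hh' with rfl | hh' <;>
      first | rfl | (simp_all [Set.mem_singleton_iff])
  have h1 : (⊤ : Subgroup (SL2 p ⧸ Subgroup.center (SL2 p))) ≤ Subgroup.centralizer S0 := by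
    rw [← hgen]; exact Subgroup.closure_le _ |>.mpr hsub
  have hcen : ∀ s ∈ S0, s ∈ Subgroup.center (SL2 p ⧸ Subgroup.center (SL2 p)) := by
    intro s hs
    rw [Subgroup.mem_center_iff]
    intro g
    exact (Subgroup.mem_centralizer_iff.mp (h1 (Subgroup.mem_top g)) s hs).symm
  have h2 : (⊤ : Subgroup (SL2 p ⧸ Subgroup.center (SL2 p))) ≤ Subgroup.center _ := by
    rw [← hgen]
    exact Subgroup.closure_le _ |>.mpr (fun x hx => hcen x hx)
  have := Subgroup.mem_center_iff.mp (h2 (Subgroup.mem_top (prj p LL))) (prj p UU)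
  exact UL_ne_LU this

lemma eigvec_contra (v : Fin 2 → ZMod p) (hv : v ≠ 0) (z y : ZMod p)
    (hA : A.val *ᵥ v = z • v) (hB : B.val *ᵥ v = y • v) : False := by
  classical
  have helper : ∀ (g : SL2 p) (μ : ZMod p), g.val *ᵥ v = μ • v →
      μ ≠ 0 ∧ (g⁻¹ : SL2 p).val *ᵥ v = μ⁻¹ • v := by
    intro g μ hg
    have hvg : ∀ u : Fin 2 → ZMod p, (g⁻¹ : SL2 p).val *ᵥ (g.val *ᵥ u) = u := by
      intro u
      rw [Matrix.mulVec_mulVec, ← Matrix.SpecialLinearGroup.coe_mul, inv_mul_cancel g]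
      simp
    have hμ : μ ≠ 0 := by
      intro h0
      apply hv
      have := hvg v
      rw [hg, h0, zero_smul, Matrix.mulVec_zero] at this
      exact this.symm
    refine ⟨hμ, ?_⟩
    have := hvg v
    rw [hg, Matrix.mulVec_smul] at this
    calc (g⁻¹ : SL2 p).val *ᵥ v = μ⁻¹ • (μ • ((g⁻¹ : SL2 p).val *ᵥ v)) := by
          rw [smul_smul, inv_mul_cancel₀ hμ, one_smul]
      _ = μ⁻¹ • v := by rw [this]
  have eig : ∀ g ∈ Subgroup.closure ({A, B} : Set (SL2 p)),
      ∃ μ : ZMod p, μ ≠ 0 ∧ g.val *ᵥ v = μ • v := by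
    intro g hg
    induction hg using Subgroup.closure_induction with
    | mem x hx =>
        rcases hx with rfl | hx
        · exact ⟨z, (helper x z hA).1, hA⟩
        · rw [Set.mem_singleton_iff] at hx; subst hx
          exact ⟨y, (helper x y hB).1, hB⟩
    | one => exact ⟨1, one_ne_zero, by simp⟩
    | mul x x' hx hx' ihx ihx' =>
        obtain ⟨μ₁, hμ₁, h₁⟩ := ihx
        obtain ⟨μ₂, hμ₂, h₂⟩ := ihx'
        refine ⟨μ₁ * μ₂, mul_ne_zero hμ₁ hμ₂, ?_⟩
        rw [Matrix.SpecialLinearGroup.coe_mul, ← Matrix.mulVec_mulVec, h₂,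
          Matrix.mulVec_smul, h₁, smul_smul, mul_comm μ₂ μ₁]
    | inv x hx ihx =>
        obtain ⟨μ, hμ, h₁⟩ := ihx
        exact ⟨μ⁻¹, inv_ne_zero hμ, (helper x μ h₁).2⟩
  have hmap : Subgroup.map (prj p) (Subgroup.closure ({A, B} : Set (SL2 p))) = ⊤ := by
    rw [MonoidHom.map_closure, Set.image_insert_eq, Set.image_singleton, hgen]
  have getpre : ∀ W : SL2 p, ∃ g ∈ Subgroup.closure ({A, B} : Set (SL2 p)),
      ∃ r : ZMod p, r ≠ 0 ∧ W.val = r • g.val := by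
    intro W
    have : prj p W ∈ Subgroup.map (prj p) (Subgroup.closure ({A, B} : Set (SL2 p))) := by
      rw [hmap]; exact Subgroup.mem_top _
    obtain ⟨g, hg, hπg⟩ := Subgroup.mem_map.mp this
    obtain ⟨zc, hzc, hzeq⟩ := (QuotientGroup.mk'_eq_mk' _).mp hπg
    obtain ⟨r, hr2, hrv⟩ := center_char hzc
    refine ⟨g, hg, r, ?_, ?_⟩
    · intro h0; rw [h0, zero_mul] at hr2; exact zero_ne_one hr2
    · rw [← hzeq, Matrix.SpecialLinearGroup.coe_mul, hrv]
      ext i j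
      simp [Matrix.mul_apply, Fin.sum_univ_two, Matrix.smul_apply, Matrix.one_apply]
      fin_cases j <;> simp [mul_comm]
  obtain ⟨gU, hgU, rU, hrU, hUval⟩ := getpre UU
  obtain ⟨gL, hgL, rL, hrL, hLval⟩ := getpre LL
  obtain ⟨μU, hμU, hUe⟩ := eig gU hgU
  obtain ⟨μL, hμL, hLe⟩ := eig gL hgL
  have hUv : (UU : SL2 p).val *ᵥ v = (rU * μU) • v := by
    rw [hUval, Matrix.smul_mulVec, hUe, smul_smul]
  have hLv : (LL : SL2 p).val *ᵥ v = (rL * μL) • v := by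
    rw [hLval, Matrix.smul_mulVec, hLe, smul_smul]
  set α := rU * μU
  set β := rL * μL
  have e1 : v 0 + v 1 = α * v 0 := by
    have := congrFun hUv 0
    simpa [UU, Matrix.mulVec, dotProduct, Fin.sum_univ_two] using this
  have e2 : v 1 = α * v 1 := by
    have := congrFun hUv 1
    simpa [UU, Matrix.mulVec, dotProduct, Fin.sum_univ_two] using this
  have e4 : v 0 + v 1 = β * v 1 := by
    have := congrFun hLv 1
    simpa [LL, Matrix.mulVec, dotProduct, Fin.sum_univ_two] using this
  have hv1 : v 1 = 0 := by
    by_contra h1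
    have hα : α = 1 := by
      have h2 : (α - 1) * v 1 = 0 := by linear_combination -e2
      rcases mul_eq_zero.mp h2 with h | h
      · linear_combination h
      · exact absurd h h1
    rw [hα, one_mul] at e1
    exact h1 (by linear_combination e1)
  have hv0 : v 0 = 0 := by
    rw [hv1, mul_zero] at e4
    simpa [hv1] using e4
  apply hv
  funext i
  fin_cases i <;> simp [hv0, hv1]

end WithGen
end Groups



section Indep
variable {p : ℕ} [Fact p.Prime] (A B : SL2 p)
  (hcc : A.val * B.val = B.val * A.val → False)
  (hec : ∀ (v : Fin 2 → ZMod p), v ≠ 0 → ∀ (z y : ZMod p),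
    A.val *ᵥ v = z • v → B.val *ᵥ v = y • v → False)

lemma expand_PQ {R : Type*} [CommRing R] (Am Bm : Matrix (Fin 2) (Fin 2) R) (z y : R) :
    (Am - z • 1) * (Bm - y • 1) = Am * Bm - y • Am - z • Bm + (z*y) • 1 := by
  ext i j
  fin_cases i <;> fin_cases j <;>
    simp [Matrix.mul_apply, Fin.sum_univ_two, Matrix.one_apply, Matrix.smul_apply] <;> ring1

include hcc

lemma scalar_commute_contra (z : ZMod p) (h : A.val = z • 1) : False := by
  apply hcc
  rw [h, smul_mul_assoc, one_mul, mul_smul_comm, mul_one]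

lemma scalar_commute_contra' (z : ZMod p) (h : B.val = z • 1) : False := by
  apply hcc
  rw [h, smul_mul_assoc, one_mul, mul_smul_comm, mul_one]

include hec in
lemma indep_unprimed :
    LinearIndependent (ZMod p) ![1, A.val, B.val, A.val * B.val] := by
  classical
  rw [Fintype.linearIndependent_iff]
  intro g hg
  have hsum : g 0 • (1 : Matrix (Fin 2) (Fin 2) (ZMod p)) + g 1 • A.val + g 2 • B.val
      + g 3 • (A.val * B.val) = 0 := by
    have := hg
    rw [Fin.sum_univ_four] at this
    simpa using this
  have h3 : g 3 = 0 := by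
    by_contra h3
    set x := -(g 0)/(g 3) with hx
    set y := -(g 1)/(g 3) with hy
    set z := -(g 2)/(g 3) with hz
    have hAB : A.val * B.val = x • 1 + y • A.val + z • B.val := by
      rw [hx, hy, hz]
      linear_combination (norm := (match_scalars <;> field_simp <;> ring)) ((g 3)⁻¹ : ZMod p) • hsum
    set P := A.val - z • 1 with hP
    set Q := B.val - y • 1 with hQdef
    have hPQ : P * Q = (x + y*z) • 1 := by
      rw [hP, hQdef, expand_PQ, hAB]
      module
    rcases eq_or_ne (x + y*z) 0 with hμ | hμ
    · -- P * Q = 0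
      rw [hμ, zero_smul] at hPQ
      rcases eq_or_ne P 0 with hP0 | hP0
      · exact scalar_commute_contra A B hcc z (by rw [← sub_eq_zero]; exact hP0)
      rcases eq_or_ne Q 0 with hQ0 | hQ0
      · exact scalar_commute_contra' A B hcc y (by rw [← sub_eq_zero]; exact hQ0)
      -- get u with Q *ᵥ u ≠ 0
      have hQu : ∃ u, Q *ᵥ u ≠ 0 := by
        by_contra hcon
        push_neg at hcon
        apply hQ0
        ext i j
        have := congrFun (hcon (Pi.single j 1)) i
        rw [Matrix.mulVec_single] at this
        simpa using this
      obtain ⟨u, hu⟩ := hQu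
      set v := Q *ᵥ u with hvdef
      have hPv : P *ᵥ v = 0 := by
        rw [hvdef, Matrix.mulVec_mulVec, hPQ, Matrix.zero_mulVec]
      have hAv : A.val *ᵥ v = z • v := by
        have : P *ᵥ v = A.val *ᵥ v - z • v := by
          rw [hP, Matrix.sub_mulVec, Matrix.smul_mulVec, Matrix.one_mulVec]
        rw [this] at hPv
        rw [← sub_eq_zero]
        exact hPv
      have hdetQ : Q.det = 0 := by
        by_contra hd
        apply hP0
        have hunit : IsUnit Q.det := isUnit_iff_ne_zero.mpr hd
        calc P = P * (Q * Q⁻¹) := by rw [Matrix.mul_nonsing_inv Q hunit, Matrix.mul_one]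
          _ = (P * Q) * Q⁻¹ := by rw [mul_assoc]
          _ = 0 := by rw [hPQ, Matrix.zero_mul]
      have hcross : (Q *ᵥ v) 0 * v 1 - (Q *ᵥ v) 1 * v 0 = 0 := by
        set D : Matrix (Fin 2) (Fin 2) (ZMod p) := Matrix.of ![![v 0, u 0], ![v 1, u 1]] with hD
        have hQD : (Q * D).det = 0 := by rw [Matrix.det_mul, hdetQ, zero_mul]
        have hcol0 : ∀ i, (Q * D) i 0 = (Q *ᵥ v) i := by
          intro i
          simp [hD, Matrix.mul_apply, Matrix.mulVec, dotProduct, Fin.sum_univ_two]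
        have hcol1 : ∀ i, (Q * D) i 1 = v i := by
          intro i
          have : (Q *ᵥ u) i = v i := by rw [hvdef]
          rw [← this]
          simp [hD, Matrix.mul_apply, Matrix.mulVec, dotProduct, Fin.sum_univ_two]
        rw [det_fin_two, hcol0 0, hcol0 1, hcol1 0, hcol1 1] at hQD
        linear_combination hQD
      have hv01 : v 0 ≠ 0 ∨ v 1 ≠ 0 := by
        by_contra hcon
        push_neg at hcon
        apply hu
        funext i
        fin_cases i <;> simp [hcon.1, hcon.2]
      have hspan : ∃ lam : ZMod p, Q *ᵥ v = lam • v := by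
        rcases hv01 with h0 | h1
        · refine ⟨(Q *ᵥ v) 0 / v 0, ?_⟩
          funext i
          fin_cases i <;> simp only [Pi.smul_apply, smul_eq_mul] <;> field_simp
          simp only [Fin.zero_eta]
          change (Q *ᵥ v) 1 * v 0 = (Q *ᵥ v) 0 * v 1
          linear_combination -hcross
        · refine ⟨(Q *ᵥ v) 1 / v 1, ?_⟩
          funext i
          fin_cases i <;> simp only [Pi.smul_apply, smul_eq_mul] <;> field_simp
          all_goals simp only [Fin.zero_eta, Fin.mk_one]
          linear_combination hcross
      obtain ⟨lam, hlam⟩ := hspan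
      have hBv : B.val *ᵥ v = (y + lam) • v := by
        have hBQ : B.val = Q + y • 1 := by rw [hQdef]; module
        rw [hBQ, Matrix.add_mulVec, hlam, Matrix.smul_mulVec, Matrix.one_mulVec,
          add_smul, add_comm]
      exact hec v hu z (y + lam) hAv hBv
    · -- x + y*z ≠ 0 : A and B commute
      have h1 : P * ((x + y*z)⁻¹ • Q) = 1 := by
        rw [mul_smul_comm, hPQ, smul_smul, inv_mul_cancel₀ hμ, one_smul]
      have h2 := mul_eq_one_comm.mp h1
      have hQP : Q * P = (x + y*z) • 1 := by
        calc Q * P = (x + y*z) • (((x + y*z)⁻¹ • Q) * P) := by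
              rw [smul_mul_assoc, smul_smul, mul_inv_cancel₀ hμ, one_smul]
          _ = (x + y*z) • 1 := by rw [h2]
      apply hcc
      have hexp1 : P * Q = A.val * B.val - y • A.val - z • B.val + (z*y) • 1 := by
        rw [hP, hQdef, expand_PQ]
      have hexp2 : Q * P = B.val * A.val - z • B.val - y • A.val + (y*z) • 1 := by
        rw [hP, hQdef, expand_PQ]
      have heq : P * Q = Q * P := by rw [hPQ, hQP]
      rw [hexp1, hexp2] at heq
      linear_combination (norm := module) heq
  rw [h3, zero_smul, add_zero] at hsum
  have h2 : g 2 = 0 := by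
    by_contra h2
    apply hcc
    have hB : B.val = (-(g 0)/(g 2)) • 1 + (-(g 1)/(g 2)) • A.val := by
      linear_combination (norm := (match_scalars <;> field_simp <;> ring)) ((g 2)⁻¹ : ZMod p) • hsum
    rw [hB, Matrix.mul_add, Matrix.add_mul, mul_smul_comm, smul_mul_assoc, Matrix.mul_one,
      Matrix.one_mul, mul_smul_comm, smul_mul_assoc]
  rw [h2, zero_smul, add_zero] at hsum
  have h1 : g 1 = 0 := by
    by_contra h1
    apply scalar_commute_contra A B hcc (-(g 0)/(g 1))
    linear_combination (norm := (match_scalars <;> field_simp <;> ring)) ((g 1)⁻¹ : ZMod p) • hsum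
  rw [h1, zero_smul, add_zero] at hsum
  have h0 : g 0 = 0 := by
    have := congrFun (congrFun hsum 0) 0
    simpa [Matrix.smul_apply, Matrix.one_apply] using this
  intro i
  fin_cases i <;> assumption

end Indep

section Main
variable {F : Type*} [Field F]

lemma indep_transfer (M N M' N' : Matrix (Fin 2) (Fin 2) F)
    (hM : M.det = 1) (hN : N.det = 1) (hM' : M'.det = 1) (hN' : N'.det = 1)
    (ta : trace M' = trace M) (tb : trace N' = trace N) (tc : trace (M'*N') = trace (M*N))
    (hind : LinearIndependent F (wrd M N)) : LinearIndependent F (wrd M' N') := by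
  classical
  rw [Fintype.linearIndependent_iff]
  intro g hg
  set X := ∑ i, g i • wrd M N i with hX
  have hXj : ∀ j, trace (X * wrd M N j) = 0 := by
    intro j
    have h1 : X * wrd M N j = ∑ i, g i • (wrd M N i * wrd M N j) := by
      rw [hX, Finset.sum_mul]
      exact Finset.sum_congr rfl fun i _ => smul_mul_assoc _ _ _
    rw [h1, trace_sum]
    have h2 : ∀ i, trace (g i • (wrd M N i * wrd M N j))
        = g i * trace (wrd M' N' i * wrd M' N' j) := by
      intro i
      rw [trace_smul, smul_eq_mul, wrd_trace_mul M N hM hN, wrd_trace_mul M' N' hM' hN',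
        ta, tb, tc]
    rw [Finset.sum_congr rfl fun i _ => h2 i]
    have h3 : ∑ i, g i * trace (wrd M' N' i * wrd M' N' j)
        = trace ((∑ i, g i • wrd M' N' i) * wrd M' N' j) := by
      rw [Finset.sum_mul, trace_sum]
      exact (Finset.sum_congr rfl fun i _ => by
        rw [smul_mul_assoc, trace_smul, smul_eq_mul]).symm
    rw [h3, hg, Matrix.zero_mul, trace_zero]
  have hX0 : X = 0 := eq_zero_of_trace_pair X (wrd M N) hind hXj
  intro i
  exact Fintype.linearIndependent_iff.mp hind g (hX ▸ hX0) i

theorem conj_construction (M N M' N' : Matrix (Fin 2) (Fin 2) F)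
    (hM' : M'.det = 1) (hN' : N'.det = 1)
    (ta : trace M' = trace M) (tb : trace N' = trace N) (tc : trace (M'*N') = trace (M*N))
    (hM : M.det = 1) (hN : N.det = 1)
    (hind : LinearIndependent F (wrd M N)) (hind' : LinearIndependent F (wrd M' N')) :
    ∃ g : Matrix (Fin 2) (Fin 2) F, IsUnit g.det ∧ g * M' = M * g ∧ g * N' = N * g := by
  classical
  obtain ⟨b, hb⟩ : ∃ b : Module.Basis (Fin 4) F (Matrix (Fin 2) (Fin 2) F), ⇑b = wrd M N :=
    ⟨_, coe_basisOfLinearIndependentOfCardEqFinrank hind (card_eq_finrank (F := F))⟩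
  obtain ⟨b', hb'⟩ : ∃ b' : Module.Basis (Fin 4) F (Matrix (Fin 2) (Fin 2) F), ⇑b' = wrd M' N' :=
    ⟨_, coe_basisOfLinearIndependentOfCardEqFinrank hind' (card_eq_finrank (F := F))⟩
  set Φe := b'.equiv b (Equiv.refl _) with hΦe
  set Φ := Φe.toLinearMap with hΦdef
  have hΦw : ∀ i, Φ (wrd M' N' i) = wrd M N i := by
    intro i
    rw [← hb, ← hb']
    exact b'.equiv_apply i b (Equiv.refl _)
  have hmul : ∀ X Y, Φ (X * Y) = Φ X * Φ Y := by
    have hext : (LinearMap.mul F (Matrix (Fin 2) (Fin 2) F)).compr₂ Φ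
        = (LinearMap.mul F (Matrix (Fin 2) (Fin 2) F)).compl₁₂ Φ Φ := by
      apply LinearMap.ext_basis b' b'
      intro i j
      simp only [LinearMap.compr₂_apply, LinearMap.compl₁₂_apply, LinearMap.mul_apply']
      rw [hb']
      rw [wrd_mul M' N' hM' hN' i j, map_sum]
      rw [hΦw i, hΦw j, wrd_mul M N hM hN i j, ta, tb, tc]
      congr 1
      funext k
      rw [_root_.map_smul, hΦw]
    intro X Y
    have h := LinearMap.congr_fun (LinearMap.congr_fun hext X) Y
    simpa [LinearMap.compr₂_apply, LinearMap.compl₁₂_apply, LinearMap.mul_apply'] using h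
  -- matrix units images
  set f : Fin 2 → Fin 2 → Matrix (Fin 2) (Fin 2) F :=
    fun i j => Φ (Matrix.single i j 1) with hf
  have funit : ∀ i j k l, f i j * f k l = if j = k then f i l else 0 := by
    intro i j k l
    rw [hf]
    simp only []
    rw [← hmul]
    by_cases hjk : j = k
    · subst hjk
      rw [if_pos rfl, Matrix.single_mul_single_same, one_mul]
    · rw [if_neg hjk, Matrix.single_mul_single_of_ne (h := hjk), _root_.map_zero]
  have hΦinj : Function.Injective Φ := Φe.injective
  have hf00 : f 0 0 ≠ 0 := by
    intro h0
    have hE : Matrix.single (0:Fin 2) (0:Fin 2) (1:F) = (0 : Matrix (Fin 2) (Fin 2) F) :=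
      hΦinj (by rw [_root_.map_zero]; exact h0)
    have := congrFun (congrFun hE 0) 0
    simp at this
  obtain ⟨u, hu⟩ : ∃ u, f 0 0 *ᵥ u ≠ 0 := by
    by_contra hcon
    push_neg at hcon
    apply hf00
    ext i j
    have := congrFun (hcon (Pi.single j 1)) i
    rw [Matrix.mulVec_single] at this
    simpa using this
  set wv := f 0 0 *ᵥ u with hwv
  have hfww : f 0 0 *ᵥ wv = wv := by
    rw [hwv, Matrix.mulVec_mulVec]
    have h1 : f 0 0 * f 0 0 = f 0 0 := by rw [funit]; simp
    rw [h1]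
  set gm : Matrix (Fin 2) (Fin 2) F := Matrix.of (fun i l => ((f l 0) *ᵥ wv) i) with hgm
  have hcolE : ∀ j k : Fin 2, gm * Matrix.single j k 1 = f j k * gm := by
    intro j k
    ext i l
    have hR : (f j k * gm) i l = ((f j k * f l 0) *ᵥ wv) i := by
      rw [← Matrix.mulVec_mulVec]
      simp [Matrix.mul_apply, Matrix.mulVec, dotProduct, hgm]
    rw [hR, funit j k l 0]
    by_cases hkl : k = l
    · subst hkl
      rw [if_pos rfl, Matrix.mul_single_apply_same, mul_one]
      rfl
    · rw [if_neg hkl, Matrix.zero_mulVec]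
      simp [Ne.symm hkl]
  have glin : ∀ X, gm * X = Φ X * gm := by
    have hLR : (LinearMap.mulLeft F gm) = (LinearMap.mulRight F gm).comp Φ := by
      apply Module.Basis.ext (Matrix.stdBasis F (Fin 2) (Fin 2))
      rintro ⟨i0, j0⟩
      rw [Matrix.stdBasis_eq_single]
      simp only [LinearMap.mulLeft_apply, LinearMap.comp_apply, LinearMap.mulRight_apply]
      exact hcolE i0 j0
    intro X
    have := LinearMap.congr_fun hLR X
    simpa [LinearMap.mulLeft_apply, LinearMap.mulRight_apply] using this
  have hdet : IsUnit gm.det := by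
    rw [isUnit_iff_ne_zero]
    intro hd
    obtain ⟨v, hv0, hgv⟩ := (Matrix.exists_mulVec_eq_zero_iff).mpr hd
    have hgv2 : v 0 • wv + v 1 • ((f 1 0) *ᵥ wv) = 0 := by
      rw [← hgv]
      funext i
      have e0 : gm i 0 = wv i := by
        have : gm i 0 = ((f 0 0) *ᵥ wv) i := rfl
        rw [this, hfww]
      have e1 : gm i 1 = ((f 1 0) *ᵥ wv) i := rfl
      have eR : (gm *ᵥ v) i = gm i 0 * v 0 + gm i 1 * v 1 := by
        simp [Matrix.mulVec, dotProduct, Fin.sum_univ_two]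
      rw [eR, e0, e1]
      simp only [Pi.add_apply, Pi.smul_apply, smul_eq_mul]
      ring
    have hv00 : v 0 = 0 := by
      have h1 := congrArg (fun t => (f 0 0) *ᵥ t) hgv2
      simp only [Matrix.mulVec_add, Matrix.mulVec_smul, Matrix.mulVec_zero] at h1
      rw [hfww, Matrix.mulVec_mulVec] at h1
      have h2 : f 0 0 * f 1 0 = 0 := by rw [funit]; simp
      rw [h2, Matrix.zero_mulVec, smul_zero, add_zero] at h1
      rcases smul_eq_zero.mp h1 with h | h
      · exact h
      · exact absurd h hu
    have hv10 : v 1 = 0 := by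
      rw [hv00, zero_smul, zero_add] at hgv2
      have h1 := congrArg (fun t => (f 0 1) *ᵥ t) hgv2
      simp only [Matrix.mulVec_smul, Matrix.mulVec_zero] at h1
      rw [Matrix.mulVec_mulVec] at h1
      have h2 : f 0 1 * f 1 0 = f 0 0 := by rw [funit]; simp
      rw [h2, hfww] at h1
      rcases smul_eq_zero.mp h1 with h | h
      · exact h
      · exact absurd h hu
    apply hv0
    funext i
    fin_cases i
    · exact hv00
    · exact hv10
  refine ⟨gm, hdet, ?_, ?_⟩
  · have h1 := glin M'
    have h2 : Φ M' = M := by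
      have := hΦw 1
      simpa [wrd] using this
    rw [h1, h2]
  · have h1 := glin N'
    have h2 : Φ N' = N := by
      have := hΦw 2
      simpa [wrd] using this
    rw [h1, h2]
end Main

/-- Let `A, B ∈ SL₂(𝔽_p)` whose images generate `PSL₂(𝔽_p)` (the quotient of
`SL₂(𝔽_p)` by its center). If `Ã, B̃ ∈ SL₂(𝔽_p)` give the same trace on every word
`w ∈ F₂`, then some `g ∈ GL₂(𝔽_p)` simultaneously conjugates `(Ã, B̃)` to `(A, B)`. -/
theorem pairs_determined_by_character (p : ℕ) [Fact p.Prime]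
    (A B A' B' : Matrix.SpecialLinearGroup (Fin 2) (ZMod p))
    (hgen : Subgroup.closure
      ({QuotientGroup.mk' (Subgroup.center (Matrix.SpecialLinearGroup (Fin 2) (ZMod p))) A,
        QuotientGroup.mk' (Subgroup.center (Matrix.SpecialLinearGroup (Fin 2) (ZMod p))) B} :
        Set (Matrix.SpecialLinearGroup (Fin 2) (ZMod p) ⧸
          Subgroup.center (Matrix.SpecialLinearGroup (Fin 2) (ZMod p)))) = ⊤)
    (htr : ∀ w : FreeGroup (Fin 2),
      Matrix.trace (FreeGroup.lift (fun i => if i = 0 then A' else B') w).val =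
        Matrix.trace (FreeGroup.lift (fun i => if i = 0 then A else B) w).val) :
    ∃ g : Matrix.GeneralLinearGroup (Fin 2) (ZMod p),
      g.val * A'.val * (g⁻¹).val = A.val ∧ g.val * B'.val * (g⁻¹).val = B.val := by
  classical
  have ta : trace A'.val = trace A.val := by
    have := htr (FreeGroup.of 0)
    simpa [FreeGroup.lift_apply_of] using this
  have tb : trace B'.val = trace B.val := by
    have := htr (FreeGroup.of 1)
    simpa [FreeGroup.lift_apply_of] using this
  have tc : trace (A'.val * B'.val) = trace (A.val * B.val) := by
    have := htr (FreeGroup.of 0 * FreeGroup.of 1)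
    simpa [_root_.map_mul, FreeGroup.lift_apply_of, Matrix.SpecialLinearGroup.coe_mul] using this
  have hgen' : Subgroup.closure ({prj p A, prj p B} :
      Set (SL2 p ⧸ Subgroup.center (SL2 p))) = ⊤ := hgen
  have hcc : A.val * B.val = B.val * A.val → False := commute_contra A B hgen'
  have hec : ∀ (v : Fin 2 → ZMod p), v ≠ 0 → ∀ (z y : ZMod p),
      A.val *ᵥ v = z • v → B.val *ᵥ v = y • v → False := by
    intro v hv z y h1 h2
    exact eigvec_contra A B hgen' v hv z y h1 h2
  have hind : LinearIndependent (ZMod p) (wrd A.val B.val) := by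
    have := indep_unprimed A B hcc hec
    exact this
  have hind' : LinearIndependent (ZMod p) (wrd A'.val B'.val) :=
    indep_transfer A.val B.val A'.val B'.val A.prop B.prop A'.prop B'.prop ta tb tc hind
  obtain ⟨gm, hunit, hA, hB⟩ :=
    conj_construction A.val B.val A'.val B'.val A'.prop B'.prop ta tb tc A.prop B.prop hind hind'
  set g : Matrix.GeneralLinearGroup (Fin 2) (ZMod p) := Matrix.nonsingInvUnit gm hunit with hgdef
  have hgval : g.val = gm := rfl
  have hginv : g.val * (g⁻¹).val = 1 := by
    rw [← Units.val_mul, mul_inv_cancel]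
    rfl
  constructor
  constructor
  · calc g.val * A'.val * (g⁻¹).val = (A.val * g.val) * (g⁻¹).val := by rw [hgval, hA]
      _ = A.val * (g.val * (g⁻¹).val) := by rw [mul_assoc]
      _ = A.val := by rw [hginv, mul_one]
  · calc g.val * B'.val * (g⁻¹).val = (B.val * g.val) * (g⁻¹).val := by rw [hgval, hB]
      _ = B.val * (g.val * (g⁻¹).val) := by rw [mul_assoc]
      _ = B.val := by rw [hginv, mul_one]
end

section
/- Let U, V be finite-dimensional vector spaces over a field k, W = End(U ⊕ V), and let W⁺ ≤ W be the subspace of endomorphisms whose component in Hom(V, U) is zero (block lower-triangular with respect to the decomposition, i.e. maps sending U into U). Let A ∈ GL(U ⊕ V). If A · Hom(U, V) · A⁻¹ ⊆ W⁺ (where Hom(U,V) is embedded in W as block matrices), then A ∈ W⁺; in particular A preserves the subspace U. -/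
/-- An endomorphism of `U ⊕ V` lies in `W⁺` iff its component in `Hom(V, U)`
(the "upper-right block") vanishes. -/
def inWplus {k U V : Type*} [Field k] [AddCommGroup U] [Module k U]
    [AddCommGroup V] [Module k V] (f : (U × V) →ₗ[k] (U × V)) : Prop :=
  ∀ v : V, (f (0, v)).1 = 0

/-- The embedding of `Hom(U, V)` into `End(U ⊕ V)` as the "lower-left block". -/
def embedHom {k U V : Type*} [Field k] [AddCommGroup U] [Module k U]
    [AddCommGroup V] [Module k V] (g : U →ₗ[k] V) : (U × V) →ₗ[k] (U × V) :=
  (LinearMap.inr k U V).comp (g.comp (LinearMap.fst k U V))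

/-- Let `U, V` be nonzero finite-dimensional vector spaces over a field `k`, and let
`A ∈ GL(U ⊕ V)`. If `A · Hom(U, V) · A⁻¹ ⊆ W⁺`, where `W⁺` consists of the
endomorphisms of `U ⊕ V` with vanishing `Hom(V, U)`-component, then `A ∈ W⁺`. -/
theorem parabolic_normalizer {k U V : Type*} [Field k]
    [AddCommGroup U] [Module k U] [AddCommGroup V] [Module k V]
    [FiniteDimensional k U] [FiniteDimensional k V]
    (hU : 1 ≤ Module.finrank k U) (hV : 1 ≤ Module.finrank k V)
    (A : (U × V) ≃ₗ[k] (U × V))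
    (h : ∀ g : U →ₗ[k] V,
      inWplus ((A.toLinearMap.comp (embedHom g)).comp A.symm.toLinearMap)) :
    inWplus A.toLinearMap := by
  intro v₀
  by_contra ha
  by_cases hP : ∀ v : V, (A.symm (0, v)).1 = 0
  · -- A.symm maps {0} × V into itself, hence onto itself by dimension count,
    -- so A maps {0} × V into itself as well.
    set P : Submodule k (U × V) := LinearMap.ker (LinearMap.fst k U V) with hPdef
    have hmemP : ∀ x : U × V, x ∈ P ↔ x.1 = 0 := by
      intro x; simp [hPdef, LinearMap.mem_ker]
    have hle : P.map A.symm.toLinearMap ≤ P := by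
      rintro x ⟨y, hy, rfl⟩
      have hy1 : y.1 = 0 := (hmemP y).mp hy
      have hyeq : y = ((0 : U), y.2) := by
        ext
        · exact hy1
        · rfl
      rw [hmemP]
      rw [hyeq]
      exact hP y.2
    have hfr : Module.finrank k (P.map A.symm.toLinearMap) = Module.finrank k P :=
      LinearEquiv.finrank_map_eq A.symm P
    have heq : P.map A.symm.toLinearMap = P :=
      Submodule.eq_of_le_of_finrank_le hle (le_of_eq hfr.symm)
    have hmem : ((0 : U), v₀) ∈ P := (hmemP _).mpr rfl
    rw [← heq] at hmem
    obtain ⟨y, hyP, hxy⟩ := hmem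
    have hAy : A.toLinearMap ((0 : U), v₀) = y := by
      rw [← hxy]; simp
    exact ha (hAy ▸ (hmemP y).mp hyP)
  · push_neg at hP
    obtain ⟨v, hv⟩ := hP
    set u : U := (A.symm (0, v)).1 with hu
    obtain ⟨φ, hφ⟩ : ∃ φ : Module.Dual k U, φ u ≠ 0 := by
      by_contra hc
      push_neg at hc
      exact hv ((Module.forall_dual_apply_eq_zero_iff k u).mp hc)
    set g : U →ₗ[k] V := (φ u)⁻¹ • φ.smulRight v₀ with hg
    have hgu : g u = v₀ := by
      simp [hg, LinearMap.smulRight_apply, smul_smul, inv_mul_cancel₀ hφ]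
    have := h g v
    simp only [LinearMap.comp_apply, LinearEquiv.coe_coe] at this
    have hemb : embedHom g (A.symm (0, v)) = ((0 : U), v₀) := by
      simp [embedHom, ← hu, hgu]
    rw [hemb] at this
    exact ha this
end
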